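/- Let X be an affine hyperplane in ℝⁿ and P = H_1⁺ ∩ ⋯ ∩ H_m⁺ an irredundant representation of a nonempty n-dimensional polyhedral set such that the normal vectors of H_1,…,H_m span a subspace of dimension at least 2. If X ∩ P ≠ ∅, then X intersects some facet P ∩ H_i of P. -/

import Mathlib

open Matrix

/-- Let `X` be an affine hyperplane in `ℝⁿ` and
`P = H₁⁺ ∩ ⋯ ∩ H_m⁺` an irredundant representation of a nonempty `n`-dimensional
polyhedral set whose bounding normal vectors span a subspace of dimension at least `2`.
If `X ∩ P ≠ ∅`, then `X` meets some facet `P ∩ Hᵢ` of `P`. -/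
theorem hyperplane_meets_facet {n m : ℕ}
    (w : Fin m → (Fin n → ℝ)) (b : Fin m → ℝ) (hw : ∀ i, w i ≠ 0)
    (P : Set (Fin n → ℝ)) (hP : P = {x | ∀ i, 0 ≤ w i ⬝ᵥ x + b i})
    (hirr : ∀ i : Fin m, P ⊂ {x | ∀ j, j ≠ i → 0 ≤ w j ⬝ᵥ x + b j})
    (hrank : 2 ≤ Module.finrank ℝ (Submodule.span ℝ (Set.range w)))
    (hdim : (interior P).Nonempty)
    (u : Fin n → ℝ) (c : ℝ) (hu : u ≠ 0)
    (X : Set (Fin n → ℝ)) (hX : X = {x | u ⬝ᵥ x + c = 0})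
    (hXP : (X ∩ P).Nonempty) :
    ∃ i : Fin m, (X ∩ (P ∩ {x | w i ⬝ᵥ x + b i = 0})).Nonempty := by
  by_contra hcon
  push_neg at hcon
  -- every point of X ∩ P satisfies all inequalities strictly
  have hstrict : ∀ x ∈ X ∩ P, ∀ i, 0 < w i ⬝ᵥ x + b i := by
    intro x hx i
    have h0 : 0 ≤ w i ⬝ᵥ x + b i := by
      have := hx.2; rw [hP] at this; exact this i
    rcases lt_or_eq_of_le h0 with h | h
    · exact h
    · exact absurd (hcon i) (Set.nonempty_iff_ne_empty.mp ⟨x, hx.1, hx.2, h.symm⟩)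
  -- continuity of affine functionals
  have hcontf : ∀ (v : Fin n → ℝ) (d : ℝ), Continuous fun x : Fin n → ℝ => v ⬝ᵥ x + d := by
    intro v d
    have : Continuous fun x : Fin n → ℝ => v ⬝ᵥ x := by
      simp only [dotProduct]
      exact continuous_finset_sum _ fun j _ => (continuous_const.mul (continuous_apply j))
    exact this.add continuous_const
  -- U is the open strict region
  set U : Set (Fin n → ℝ) := {x | ∀ i, 0 < w i ⬝ᵥ x + b i} with hU
  have hUopen : IsOpen U := by
    have : U = ⋂ i, {x | 0 < w i ⬝ᵥ x + b i} := by ext x; simp [hU]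
    rw [this]
    exact isOpen_iInter_of_finite fun i => isOpen_lt continuous_const (hcontf (w i) (b i))
  have hUP : U ⊆ P := by intro x hx; rw [hP]; exact fun i => (hx i).le
  have hPclosed : IsClosed P := by
    rw [hP]
    have : {x : Fin n → ℝ | ∀ i, 0 ≤ w i ⬝ᵥ x + b i} = ⋂ i, {x | 0 ≤ w i ⬝ᵥ x + b i} := by
      ext x; simp
    rw [this]
    exact isClosed_iInter fun i => isClosed_le continuous_const (hcontf (w i) (b i))
  -- X is convex, hence preconnected
  have hXconv : Convex ℝ X := by
    rw [hX]
    intro x hx y hy a b' ha hb hab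
    simp only [Set.mem_setOf_eq] at hx hy ⊢
    have : u ⬝ᵥ (a • x + b' • y) = a * (u ⬝ᵥ x) + b' * (u ⬝ᵥ y) := by
      simp [dotProduct_add, dotProduct_smul, smul_eq_mul]
    rw [this]
    linear_combination a * hx + b' * hy - c * hab
  have hXpre : IsPreconnected X := hXconv.isPreconnected
  -- X ⊆ P
  have hXsub : X ⊆ P := by
    by_contra hns
    have hcover : X ⊆ U ∪ Pᶜ := by
      intro x hx
      by_cases hxP : x ∈ P
      · exact Or.inl (fun i => hstrict x ⟨hx, hxP⟩ i)
      · exact Or.inr hxP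
    obtain ⟨x0, hx0⟩ := hXP
    have h1 : (X ∩ U).Nonempty := ⟨x0, hx0.1, fun i => hstrict x0 hx0 i⟩
    have h2 : (X ∩ Pᶜ).Nonempty := by
      rw [Set.not_subset] at hns
      obtain ⟨y, hyX, hyP⟩ := hns
      exact ⟨y, hyX, hyP⟩
    have := hXpre U Pᶜ hUopen hPclosed.isOpen_compl hcover h1 h2
    obtain ⟨z, hzX, hzU, hzP⟩ := this
    exact hzP (hUP hzU)
  -- each w i is a multiple of u
  obtain ⟨x0, hx0X, _⟩ := hXP
  have hx0 : u ⬝ᵥ x0 + c = 0 := by rw [hX] at hx0X; exact hx0X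
  have hperp : ∀ i, ∀ v : Fin n → ℝ, u ⬝ᵥ v = 0 → w i ⬝ᵥ v = 0 := by
    intro i v hv
    by_contra ha
    set a := w i ⬝ᵥ v with ha'
    set s := (-(w i ⬝ᵥ x0 + b i) - 1) / a with hs
    have hmem : x0 + s • v ∈ X := by
      rw [hX]
      simp only [Set.mem_setOf_eq, dotProduct_add, dotProduct_smul, smul_eq_mul, hv]
      linarith [hx0]
    have hmemP := hXsub hmem
    rw [hP] at hmemP
    have := hmemP i
    simp only [dotProduct_add, dotProduct_smul, smul_eq_mul, ← ha'] at this
    rw [hs] at this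
    rw [div_mul_cancel₀ _ ha] at this
    linarith
  have hmul : ∀ i, ∃ t : ℝ, w i = t • u := by
    intro i
    refine ⟨(w i ⬝ᵥ u) / (u ⬝ᵥ u), ?_⟩
    have huu : u ⬝ᵥ u ≠ 0 := fun h => hu (by simpa using (dotProduct_self_eq_zero).mp h)
    set t := (w i ⬝ᵥ u) / (u ⬝ᵥ u) with ht
    set v := w i - t • u with hv
    have huv : u ⬝ᵥ v = 0 := by
      simp only [hv, dotProduct_sub, dotProduct_smul, smul_eq_mul, ht]
      rw [dotProduct_comm u (w i)]
      field_simp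
      ring
    have hwv : w i ⬝ᵥ v = 0 := hperp i v huv
    have hvv : v ⬝ᵥ v = 0 := by
      have e : v ⬝ᵥ v = w i ⬝ᵥ v - t * (u ⬝ᵥ v) := by
        conv_lhs => rw [hv]
        rw [sub_dotProduct, smul_dotProduct, smul_eq_mul]
      rw [e, hwv, huv]; ring
    have : v = 0 := dotProduct_self_eq_zero.mp hvv
    have := sub_eq_zero.mp (hv ▸ this)
    exact this
  -- span of range w is ≤ span {u}, contradicting rank ≥ 2
  have hle : Submodule.span ℝ (Set.range w) ≤ Submodule.span ℝ {u} := by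
    rw [Submodule.span_le]
    rintro _ ⟨i, rfl⟩
    obtain ⟨t, ht⟩ := hmul i
    rw [ht]
    exact Submodule.smul_mem _ t (Submodule.mem_span_singleton_self u)
  have h1 : Module.finrank ℝ (Submodule.span ℝ {u}) = 1 := finrank_span_singleton hu
  have h2 : Module.finrank ℝ (Submodule.span ℝ (Set.range w)) ≤ 1 := by
    rw [← h1]
    exact Submodule.finrank_mono hle
  omega
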